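/- Let f : ℝ^d → ℝ be continuously differentiable with L-Lipschitz gradient for some L > 0. Let E be a (d−1)-dimensional hyperrectangle in ℝ^d, let δ > 0 and let S be a nice δ-net of E. Let ε > 0 and let x ∈ ℝ^d with dist(x, E) > 0 (Euclidean distance from x to the set E). If every z ∈ S is ε-unreachable from x, then every y ∈ E is ε′-unreachable from x, where ε′ = ε + (δ²/(2·dist(x,E)))·(L + 2ε/dist(x,E)). -/

import Mathlib

open scoped RealInnerProductSpace


lemma hasDerivAt_norm_line {d : ℕ} (x u Δ : EuclideanSpace ℝ (Fin d)) (t : ℝ)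
    (h : x - (u + t • Δ) ≠ 0) :
    HasDerivAt (fun s : ℝ => ‖x - (u + s • Δ)‖)
      (-⟪x - (u + t • Δ), Δ⟫ / ‖x - (u + t • Δ)‖) t := by
  have hc : HasDerivAt (fun s : ℝ => x - (u + s • Δ)) (-Δ) t := by
    simpa using (((hasDerivAt_id t).smul_const Δ).const_add u).const_sub x
  have hq := hc.inner ℝ hc
  have hq0 : ⟪x - (u + t • Δ), x - (u + t • Δ)⟫ ≠ 0 := by
    rw [real_inner_self_eq_norm_sq]
    exact pow_ne_zero 2 (norm_ne_zero_iff.2 h)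
  have h2 := hq.sqrt hq0
  have h3 : (fun s : ℝ => Real.sqrt ⟪x - (u + s • Δ), x - (u + s • Δ)⟫)
      = fun s : ℝ => ‖x - (u + s • Δ)‖ := by
    funext s
    rw [real_inner_self_eq_norm_sq, Real.sqrt_sq (norm_nonneg _)]
  rw [h3] at h2
  convert h2 using 1
  rw [inner_neg_right, inner_neg_left, real_inner_comm Δ, real_inner_self_eq_norm_sq,
    Real.sqrt_sq (norm_nonneg _)]
  have hn : ‖x - (u + t • Δ)‖ ≠ 0 := norm_ne_zero_iff.2 h
  field_simp
  ring

lemma unit_lip {d : ℕ} (D : ℝ) (hD : 0 < D) (u v : EuclideanSpace ℝ (Fin d))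
    (hu : D ≤ ‖u‖) (hv : D ≤ ‖v‖) :
    ‖‖u‖⁻¹ • u - ‖v‖⁻¹ • v‖ ≤ 2 / D * ‖u - v‖ := by
  have hu0 : (0:ℝ) < ‖u‖ := lt_of_lt_of_le hD hu
  have hv0 : (0:ℝ) < ‖v‖ := lt_of_lt_of_le hD hv
  have h1 : ‖u‖⁻¹ • u - ‖v‖⁻¹ • v
      = (‖u‖⁻¹ * ‖v‖⁻¹) • (‖v‖ • (u - v) + (‖v‖ - ‖u‖) • v) := by
    match_scalars <;> (field_simp; try ring)
  rw [h1, norm_smul, Real.norm_eq_abs, abs_of_pos (by positivity)]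
  have h2 : ‖‖v‖ • (u - v) + (‖v‖ - ‖u‖) • v‖ ≤ 2 * ‖v‖ * ‖u - v‖ := by
    refine (norm_add_le _ _).trans ?_
    rw [norm_smul, norm_smul, Real.norm_eq_abs, Real.norm_eq_abs, abs_of_pos hv0]
    have h3 : |‖v‖ - ‖u‖| ≤ ‖u - v‖ := by
      rw [abs_sub_comm]; exact abs_norm_sub_norm_le u v
    nlinarith [norm_nonneg (u - v), norm_nonneg v,
      mul_le_mul_of_nonneg_right h3 (norm_nonneg v)]
  calc ‖u‖⁻¹ * ‖v‖⁻¹ * ‖‖v‖ • (u - v) + (‖v‖ - ‖u‖) • v‖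
      ≤ ‖u‖⁻¹ * ‖v‖⁻¹ * (2 * ‖v‖ * ‖u - v‖) := by gcongr
    _ = 2 * ‖u - v‖ / ‖u‖ := by field_simp
    _ ≤ 2 * ‖u - v‖ / D := by
        gcongr <;> first | exact hu | positivity
    _ = 2 / D * ‖u - v‖ := by ring

lemma norm_taylor {d : ℕ} (x u Δ : EuclideanSpace ℝ (Fin d)) (D : ℝ) (hD : 0 < D)
    (hfar : ∀ t ∈ Set.Icc (0:ℝ) 1, D ≤ ‖x - (u + t • Δ)‖) :
    abs (‖x - (u + Δ)‖ - ‖x - u‖ - (-⟪x - u, Δ⟫ / ‖x - u‖)) ≤ 1 / D * ‖Δ‖ ^ 2 := by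
  set φ' : ℝ → ℝ := fun t => -⟪x - (u + t • Δ), Δ⟫ / ‖x - (u + t • Δ)‖ with hφ'
  have hne : ∀ t ∈ Set.Icc (0:ℝ) 1, x - (u + t • Δ) ≠ 0 := by
    intro t ht
    intro hzero
    have := hfar t ht
    rw [hzero, norm_zero] at this
    linarith
  have hderiv : ∀ t ∈ Set.Icc (0:ℝ) 1,
      HasDerivAt (fun s : ℝ => ‖x - (u + s • Δ)‖) (φ' t) t :=
    fun t ht => hasDerivAt_norm_line x u Δ t (hne t ht)
  have hwcont : Continuous fun t : ℝ => x - (u + t • Δ) :=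
    continuous_const.sub (continuous_const.add (continuous_id.smul continuous_const))
  have hφcont : ContinuousOn φ' (Set.Icc (0:ℝ) 1) := by
    apply ContinuousOn.div
    · exact ((hwcont.inner continuous_const).neg).continuousOn
    · exact hwcont.norm.continuousOn
    · intro t ht
      exact norm_ne_zero_iff.2 (hne t ht)
  have huIcc : Set.uIcc (0:ℝ) 1 = Set.Icc (0:ℝ) 1 := Set.uIcc_of_le zero_le_one
  have hint : IntervalIntegrable φ' MeasureTheory.volume 0 1 := by
    apply ContinuousOn.intervalIntegrable
    rwa [huIcc]
  have key : ∫ t in (0:ℝ)..1, φ' t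
      = ‖x - (u + (1:ℝ) • Δ)‖ - ‖x - (u + (0:ℝ) • Δ)‖ :=
    intervalIntegral.integral_eq_sub_of_hasDerivAt
      (fun t ht => hderiv t (huIcc ▸ ht)) hint
  have h01 : ‖x - (u + (1:ℝ) • Δ)‖ = ‖x - (u + Δ)‖ := by rw [one_smul]
  have h00 : ‖x - (u + (0:ℝ) • Δ)‖ = ‖x - u‖ := by rw [zero_smul, add_zero]
  have hφ0 : φ' 0 = -⟪x - u, Δ⟫ / ‖x - u‖ := by
    rw [hφ']
    simp
  have key2 : ‖x - (u + Δ)‖ - ‖x - u‖ - (-⟪x - u, Δ⟫ / ‖x - u‖)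
      = ∫ t in (0:ℝ)..1, (φ' t - φ' 0) := by
    rw [intervalIntegral.integral_sub hint intervalIntegrable_const,
      intervalIntegral.integral_const, key, h01, h00, hφ0]
    simp
  rw [key2]
  have hbound : ∀ t ∈ Set.Icc (0:ℝ) 1, abs (φ' t - φ' 0) ≤ 2 / D * t * ‖Δ‖ ^ 2 := by
    intro t ht
    have h0mem : (0:ℝ) ∈ Set.Icc (0:ℝ) 1 := Set.left_mem_Icc.2 zero_le_one
    set wt := x - (u + t • Δ) with hwt
    set w0 := x - (u + (0:ℝ) • Δ) with hw0
    have hw0' : w0 = x - u := by rw [hw0, zero_smul, add_zero]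
    have hrepr : ∀ s ∈ Set.Icc (0:ℝ) 1,
        φ' s = ⟪-(‖x - (u + s • Δ)‖⁻¹ • (x - (u + s • Δ))), Δ⟫ := by
      intro s hs
      rw [hφ', inner_neg_left, real_inner_smul_left]
      field_simp
    have ht' := hrepr t ht
    have h0' := hrepr 0 h0mem
    rw [ht', h0']
    rw [← inner_sub_left]
    refine (abs_real_inner_le_norm _ _).trans ?_
    have hdiffnorm : ‖-(‖x - (u + t • Δ)‖⁻¹ • (x - (u + t • Δ)))
        - -(‖x - (u + (0:ℝ) • Δ)‖⁻¹ • (x - (u + (0:ℝ) • Δ)))‖ ≤ 2 / D * (t * ‖Δ‖) := by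
      have h1 : -(‖x - (u + t • Δ)‖⁻¹ • (x - (u + t • Δ)))
          - -(‖x - (u + (0:ℝ) • Δ)‖⁻¹ • (x - (u + (0:ℝ) • Δ)))
          = -((‖x - (u + t • Δ)‖⁻¹ • (x - (u + t • Δ)))
            - (‖x - (u + (0:ℝ) • Δ)‖⁻¹ • (x - (u + (0:ℝ) • Δ)))) := by abel
      rw [h1, norm_neg]
      have h2 := unit_lip D hD (x - (u + t • Δ)) (x - (u + (0:ℝ) • Δ))
        (hfar t ht) (hfar 0 h0mem)
      refine h2.trans ?_
      have h3 : x - (u + t • Δ) - (x - (u + (0:ℝ) • Δ)) = -(t • Δ) := by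
        rw [zero_smul, add_zero]
        abel
      rw [h3, norm_neg, norm_smul, Real.norm_eq_abs, abs_of_nonneg ht.1]
    calc ‖-(‖x - (u + t • Δ)‖⁻¹ • (x - (u + t • Δ)))
          - -(‖x - (u + (0:ℝ) • Δ)‖⁻¹ • (x - (u + (0:ℝ) • Δ)))‖ * ‖Δ‖
        ≤ 2 / D * (t * ‖Δ‖) * ‖Δ‖ := by
          gcongr
      _ = 2 / D * t * ‖Δ‖ ^ 2 := by ring
  calc abs (∫ t in (0:ℝ)..1, (φ' t - φ' 0))
      ≤ ∫ t in (0:ℝ)..1, 2 / D * t * ‖Δ‖ ^ 2 := by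
        refine (intervalIntegral.abs_integral_le_integral_abs zero_le_one).trans ?_
        apply intervalIntegral.integral_mono_on zero_le_one
        · apply ContinuousOn.intervalIntegrable
          rw [huIcc]
          exact (hφcont.sub continuousOn_const).abs
        · exact (((continuous_const.mul continuous_id).mul continuous_const)).intervalIntegrable 0 1
        · exact hbound
    _ = 1 / D * ‖Δ‖ ^ 2 := by
        rw [intervalIntegral.integral_mul_const, intervalIntegral.integral_const_mul, integral_id]
        ring

lemma taylor_bound {d : ℕ} (f : EuclideanSpace ℝ (Fin d) → ℝ) (L : ℝ) (hL : 0 < L)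
    (hf : ContDiff ℝ 1 f)
    (hlip : ∀ x y : EuclideanSpace ℝ (Fin d), ‖gradient f x - gradient f y‖ ≤ L * ‖x - y‖)
    (w v : EuclideanSpace ℝ (Fin d)) :
    abs (f (w + v) - f w - ⟪gradient f w, v⟫) ≤ L / 2 * ‖v‖ ^ 2 := by
  set c : ℝ → EuclideanSpace ℝ (Fin d) := fun t => w + t • v with hc
  have hdiff : Differentiable ℝ f := hf.differentiable one_ne_zero
  have hderiv : ∀ t : ℝ, HasDerivAt (fun s => f (c s)) ⟪gradient f (c t), v⟫ t := by
    intro t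
    have h1 : HasDerivAt c v t := by
      have h0 := ((hasDerivAt_id t).smul_const v).const_add w
      simp only [id, one_smul] at h0
      exact h0
    have h2 := (hdiff (c t)).hasGradientAt.hasFDerivAt
    have := h2.comp_hasDerivAt t h1
    simpa [InnerProductSpace.toDual_apply_apply, Function.comp_def] using this
  have hgradcont : Continuous (gradient f) := by
    have : LipschitzWith (Real.toNNReal L) (gradient f) := by
      apply LipschitzWith.of_dist_le_mul
      intro p q
      rw [dist_eq_norm, dist_eq_norm]
      refine (hlip p q).trans ?_
      gcongr
      exact Real.le_coe_toNNReal L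
    exact this.continuous
  have hccont : Continuous c := by continuity
  have hφcont : Continuous fun t => ⟪gradient f (c t), v⟫ :=
    (hgradcont.comp hccont).inner continuous_const
  have key : f (c 1) - f (c 0) = ∫ t in (0:ℝ)..1, ⟪gradient f (c t), v⟫ :=
    (intervalIntegral.integral_eq_sub_of_hasDerivAt (fun t _ => hderiv t)
      (hφcont.intervalIntegrable 0 1)).symm
  have hc0 : c 0 = w := by simp [hc]
  have hc1 : c 1 = w + v := by simp [hc]
  have key2 : f (w + v) - f w - ⟪gradient f w, v⟫
      = ∫ t in (0:ℝ)..1, (⟪gradient f (c t), v⟫ - ⟪gradient f w, v⟫) := by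
    rw [intervalIntegral.integral_sub (hφcont.intervalIntegrable 0 1)
      (intervalIntegrable_const), intervalIntegral.integral_const]
    rw [← key, hc0, hc1]
    ring_nf
  rw [key2]
  have hbound : ∀ t ∈ Set.Icc (0:ℝ) 1,
      abs (⟪gradient f (c t), v⟫ - ⟪gradient f w, v⟫) ≤ L * t * ‖v‖ ^ 2 := by
    intro t ht
    rw [← inner_sub_left]
    refine (abs_real_inner_le_norm _ _).trans ?_
    have h1 : ‖gradient f (c t) - gradient f w‖ ≤ L * (t * ‖v‖) := by
      have := hlip (c t) w
      have hct : c t - w = t • v := by simp [hc]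
      rw [hct] at this
      refine this.trans ?_
      rw [norm_smul, Real.norm_eq_abs, abs_of_nonneg ht.1]
    calc ‖gradient f (c t) - gradient f w‖ * ‖v‖ ≤ L * (t * ‖v‖) * ‖v‖ := by
          gcongr
      _ = L * t * ‖v‖ ^ 2 := by ring
  calc abs (∫ t in (0:ℝ)..1, (⟪gradient f (c t), v⟫ - ⟪gradient f w, v⟫))
      ≤ ∫ t in (0:ℝ)..1, L * t * ‖v‖ ^ 2 := by
        apply intervalIntegral.abs_integral_le_integral_abs ?_ |>.trans
        · apply intervalIntegral.integral_mono_on zero_le_one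
          · exact ((hφcont.sub continuous_const).abs.intervalIntegrable 0 1)
          · exact ((continuous_const.mul continuous_id).mul continuous_const).intervalIntegrable 0 1
          · exact hbound
        · exact zero_le_one
    _ = L / 2 * ‖v‖ ^ 2 := by
        rw [intervalIntegral.integral_mul_const, intervalIntegral.integral_const_mul,
          integral_id]
        ring



/-- A face of the hyperrectangle `∏ i, [a i, b i]`: each coordinate interval is either kept
or replaced by one of its endpoints. -/
def IsFace {d : ℕ} (a b : Fin d → ℝ) (F : Set (EuclideanSpace ℝ (Fin d))) : Prop :=
  ∃ c : Fin d → Set ℝ,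
    (∀ i, c i = Set.Icc (a i) (b i) ∨ c i = {a i} ∨ c i = {b i}) ∧
    F = {x : EuclideanSpace ℝ (Fin d) | ∀ i, x i ∈ c i}

/-- `S` is a `δ`-net of `F`: `S ⊆ F` and every point of `F` is within distance `δ` of `S`. -/
def IsDeltaNet {d : ℕ} (δ : ℝ) (F S : Set (EuclideanSpace ℝ (Fin d))) : Prop :=
  S ⊆ F ∧ ∀ y ∈ F, ∃ z ∈ S, dist y z ≤ δ

/-- `S` is a nice `δ`-net of the hyperrectangle `∏ i, [a i, b i]`. -/
def IsNiceDeltaNet {d : ℕ} (δ : ℝ) (a b : Fin d → ℝ)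
    (S : Set (EuclideanSpace ℝ (Fin d))) : Prop :=
  S ⊆ {x : EuclideanSpace ℝ (Fin d) | ∀ i, x i ∈ Set.Icc (a i) (b i)} ∧
  ∀ F : Set (EuclideanSpace ℝ (Fin d)), IsFace a b F → IsDeltaNet δ F (S ∩ F)

set_option maxHeartbeats 2000000 in
theorem stmt_14 (d : ℕ) (hd : 1 ≤ d)
    (f : EuclideanSpace ℝ (Fin d) → ℝ) (L : ℝ) (hL : 0 < L)
    (hf : ContDiff ℝ 1 f)
    (hlip : ∀ x y : EuclideanSpace ℝ (Fin d),
      ‖gradient f x - gradient f y‖ ≤ L * ‖x - y‖)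
    (a b : Fin d → ℝ) (hab : ∀ i, a i ≤ b i)
    (hdim : (Finset.univ.filter fun i => a i < b i).card = d - 1)
    (E : Set (EuclideanSpace ℝ (Fin d)))
    (hE : E = {x : EuclideanSpace ℝ (Fin d) | ∀ i, x i ∈ Set.Icc (a i) (b i)})
    (δ : ℝ) (hδ : 0 < δ)
    (S : Set (EuclideanSpace ℝ (Fin d))) (hS : IsNiceDeltaNet δ a b S)
    (ε : ℝ) (hε : 0 < ε)
    (x : EuclideanSpace ℝ (Fin d)) (hx : 0 < Metric.infDist x E)
    (hunreach : ∀ z ∈ S, f z > f x - ε * ‖x - z‖) :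
    ∀ y ∈ E, f y > f x -
      (ε + δ^2 / (2 * Metric.infDist x E) * (L + 2 * ε / Metric.infDist x E)) * ‖x - y‖ := by
  classical
  set D := Metric.infDist x E with hD
  -- structure of E
  have hEcompact : IsCompact E := by
    have h1 : E = ⇑(EuclideanSpace.equiv (Fin d) ℝ) ⁻¹'
        (Set.univ.pi fun i => Set.Icc (a i) (b i)) := by
      ext w
      simp only [hE, Set.mem_setOf_eq, Set.mem_preimage, Set.mem_univ_pi]
      rfl
    rw [h1]
    exact (Homeomorph.isCompact_preimage
        (EuclideanSpace.equiv (Fin d) ℝ).toHomeomorph).2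
      (isCompact_univ_pi fun i => isCompact_Icc)
  have hEconvex : Convex ℝ E := by
    rw [hE]
    intro u hu v hv s t hs ht hst i
    have := (convex_Icc (a i) (b i)) (hu i) (hv i) hs ht hst
    simpa using this
  have hEne : E.Nonempty := by
    refine ⟨(WithLp.equiv 2 (Fin d → ℝ)).symm a, ?_⟩
    rw [hE]
    exact fun i => ⟨le_rfl, hab i⟩
  have hdist : ∀ w ∈ E, D ≤ ‖x - w‖ := by
    intro w hw
    rw [← dist_eq_norm]
    exact Metric.infDist_le_dist_of_mem hw
  -- minimizer of g over E
  have hgcont : Continuous fun w : EuclideanSpace ℝ (Fin d) => f w + ε * ‖x - w‖ :=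
    (hf.continuous).add (continuous_const.mul ((continuous_const.sub continuous_id).norm))
  obtain ⟨p, hpE, hpmin⟩ := hEcompact.exists_isMinOn hEne hgcont.continuousOn
  have hpE' : ∀ i, p i ∈ Set.Icc (a i) (b i) := by rw [hE] at hpE; exact hpE
  -- minimal face of p
  set cc : Fin d → Set ℝ := fun i =>
    if p i = a i then {a i} else if p i = b i then {b i} else Set.Icc (a i) (b i) with hcc
  have hccface : ∀ i, cc i = Set.Icc (a i) (b i) ∨ cc i = {a i} ∨ cc i = {b i} := by
    intro i
    rw [hcc]
    dsimp only
    split_ifs <;> tauto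
  have hpF : p ∈ {w : EuclideanSpace ℝ (Fin d) | ∀ i, w i ∈ cc i} := by
    intro i
    rw [hcc]
    dsimp only
    split_ifs with h1 h2
    · exact h1
    · exact h2
    · exact hpE' i
  obtain ⟨z, hzmem, hzdist⟩ :=
    (hS.2 {w : EuclideanSpace ℝ (Fin d) | ∀ i, w i ∈ cc i} ⟨cc, hccface, rfl⟩).2 p hpF
  have hzS : z ∈ S := hzmem.1
  have hzF : ∀ i, z i ∈ cc i := hzmem.2
  have hzE : z ∈ E := by
    rw [hE]
    intro i
    have := hzF i
    rw [hcc] at this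
    dsimp only at this
    split_ifs at this with h1 h2
    · rw [Set.mem_singleton_iff] at this; rw [this]; exact ⟨le_rfl, hab i⟩
    · rw [Set.mem_singleton_iff] at this; rw [this]; exact ⟨hab i, le_rfl⟩
    · exact this
  set Δ : EuclideanSpace ℝ (Fin d) := z - p with hΔdef
  have hΔnorm : ‖Δ‖ ≤ δ := by
    rw [hΔdef, ← dist_eq_norm, dist_comm]
    exact hzdist
  -- fixed coordinates have Δ i = 0
  have hΔfix : ∀ i, (p i = a i ∨ p i = b i) → Δ i = 0 := by
    intro i hi
    have hzi := hzF i
    rw [hcc] at hzi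
    dsimp only at hzi
    have hΔi : Δ i = z i - p i := by
      rw [hΔdef]
      simp [PiLp.sub_apply]
    rcases hi with h1 | h1
    · rw [if_pos h1] at hzi
      rw [Set.mem_singleton_iff] at hzi
      rw [hΔi, hzi, h1, sub_self]
    · by_cases h0 : p i = a i
      · rw [if_pos h0] at hzi
        rw [Set.mem_singleton_iff] at hzi
        rw [hΔi, hzi, h0, sub_self]
      · rw [if_neg h0, if_pos h1] at hzi
        rw [Set.mem_singleton_iff] at hzi
        rw [hΔi, hzi, h1, sub_self]
  -- feasibility radius
  haveI : Nonempty (Fin d) := ⟨⟨0, hd⟩⟩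
  set m : Fin d → ℝ := fun i =>
    if p i = a i ∨ p i = b i then 1
    else min (p i - a i) (b i - p i) / (|Δ i| + 1) with hm
  have hmpos : ∀ i, 0 < m i := by
    intro i
    rw [hm]
    dsimp only
    split_ifs with h1
    · exact one_pos
    · push_neg at h1
      have ha' : a i < p i := lt_of_le_of_ne (hpE' i).1 (Ne.symm h1.1)
      have hb' : p i < b i := lt_of_le_of_ne (hpE' i).2 h1.2
      have : 0 < min (p i - a i) (b i - p i) := lt_min (by linarith) (by linarith)
      positivity
  set t₀ : ℝ := Finset.univ.inf' Finset.univ_nonempty m with ht₀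
  have ht₀pos : 0 < t₀ := by
    rw [ht₀, Finset.lt_inf'_iff]
    exact fun i _ => hmpos i
  have hfeas : ∀ r : ℝ, 0 ≤ r → r ≤ t₀ → p + (-r) • Δ ∈ E := by
    intro r hr0 hrt
    rw [hE]
    intro i
    have hcoord : (p + (-r) • Δ) i = p i - r * Δ i := by
      simp [PiLp.add_apply, PiLp.smul_apply]
      ring
    rw [hcoord]
    by_cases hfix : p i = a i ∨ p i = b i
    · rw [hΔfix i hfix, mul_zero, sub_zero]
      exact hpE' i
    · push_neg at hfix
      have ha' : a i < p i := lt_of_le_of_ne (hpE' i).1 (Ne.symm hfix.1)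
      have hb' : p i < b i := lt_of_le_of_ne (hpE' i).2 hfix.2
      have hmi : m i = min (p i - a i) (b i - p i) / (|Δ i| + 1) := by
        rw [hm]
        dsimp only
        rw [if_neg (by push_neg; exact hfix)]
      have hrm : r ≤ m i := hrt.trans (Finset.inf'_le m (Finset.mem_univ i))
      have habs : 0 ≤ |Δ i| := abs_nonneg _
      have hr1 : r * (|Δ i| + 1) ≤ min (p i - a i) (b i - p i) := by
        rw [hmi] at hrm
        rw [← le_div_iff₀ (by positivity)]
        exact hrm
      have h2 : r * |Δ i| ≤ min (p i - a i) (b i - p i) := by nlinarith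
      have h3 := min_le_left (p i - a i) (b i - p i)
      have h4 := min_le_right (p i - a i) (b i - p i)
      have h6 : r * Δ i ≤ r * |Δ i| := mul_le_mul_of_nonneg_left (le_abs_self _) hr0
      have h7 : r * -|Δ i| ≤ r * Δ i := mul_le_mul_of_nonneg_left (neg_abs_le _) hr0
      constructor <;> nlinarith
  have hpx : D ≤ ‖x - p‖ := hdist p hpE
  have htay := taylor_bound f L hL hf hlip
  set B : ℝ := ⟪gradient f p, Δ⟫ + ε * (-⟪x - p, Δ⟫ / ‖x - p‖) with hB
  have hkeyt : ∀ t : ℝ, 0 < t → t ≤ t₀ →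
      t * B ≤ (L / 2 + ε / D) * ‖Δ‖ ^ 2 * t ^ 2 := by
    intro t ht htt
    have hmem1 : p + (-t) • Δ ∈ E := hfeas t ht.le htt
    have hgmin : f p + ε * ‖x - p‖ ≤ f (p + (-t) • Δ) + ε * ‖x - (p + (-t) • Δ)‖ :=
      isMinOn_iff.1 hpmin _ hmem1
    have htf := (abs_le.1 (htay p ((-t) • Δ))).2
    have hfar' : ∀ s ∈ Set.Icc (0:ℝ) 1, D ≤ ‖x - (p + s • ((-t) • Δ))‖ := by
      intro s hs
      have h1 : s • ((-t) • Δ) = (-(s * t)) • Δ := by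
        rw [smul_smul]
        congr 1
        ring
      rw [h1]
      refine hdist _ (hfeas (s * t) (mul_nonneg hs.1 ht.le) ?_)
      calc s * t ≤ 1 * t := mul_le_mul_of_nonneg_right hs.2 ht.le
        _ = t := one_mul t
        _ ≤ t₀ := htt
    have htn := (abs_le.1 (norm_taylor x p ((-t) • Δ) D hx hfar')).2
    have e1 : ⟪gradient f p, (-t) • Δ⟫ = (-t) * ⟪gradient f p, Δ⟫ :=
      real_inner_smul_right _ _ _
    have e2 : ⟪x - p, (-t) • Δ⟫ = (-t) * ⟪x - p, Δ⟫ := real_inner_smul_right _ _ _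
    have e3 : ‖(-t) • Δ‖ ^ 2 = t ^ 2 * ‖Δ‖ ^ 2 := by
      rw [norm_smul, Real.norm_eq_abs, mul_pow, sq_abs]
      ring
    rw [e1, e3] at htf
    rw [e2, e3] at htn
    have htn' := mul_le_mul_of_nonneg_left htn hε.le
    rw [hB]
    ring_nf at htf htn' hgmin ⊢
    linarith
  have hLD : 0 ≤ L / 2 + ε / D := by
    have h1 : 0 ≤ ε / D := div_nonneg hε.le hx.le
    linarith
  have hBle : B ≤ 0 := by
    by_contra hpos
    push_neg at hpos
    set C : ℝ := (L / 2 + ε / D) * ‖Δ‖ ^ 2 with hC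
    have hC0 : 0 ≤ C := mul_nonneg hLD (sq_nonneg _)
    set t' : ℝ := min t₀ (B / (C + 1)) with ht'
    have ht'pos : 0 < t' := lt_min ht₀pos (div_pos hpos (by linarith))
    have h1 := hkeyt t' ht'pos (min_le_left _ _)
    have h2 : t' * (C + 1) ≤ B := by
      rw [← le_div_iff₀ (by linarith)]
      exact min_le_right _ _
    nlinarith [mul_le_mul_of_nonneg_left h2 ht'pos.le, mul_pos ht'pos ht'pos]
  have hfarz : ∀ s ∈ Set.Icc (0:ℝ) 1, D ≤ ‖x - (p + s • Δ)‖ := by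
    intro s hs
    have h1 : (1 - s) • p + s • z = p + s • Δ := by
      rw [hΔdef]
      module
    refine hdist _ ?_
    rw [← h1]
    exact hEconvex hpE hzE (by linarith [hs.2]) hs.1 (by ring)
  have htfz := (abs_le.1 (htay p Δ)).2
  have htnz := (abs_le.1 (norm_taylor x p Δ D hx hfarz)).2
  have hpz : p + Δ = z := by
    rw [hΔdef]
    abel
  rw [hpz] at htfz htnz
  have hgz : f z + ε * ‖x - z‖ ≤ f p + ε * ‖x - p‖ + (L / 2 + ε / D) * δ ^ 2 := by
    have htnz' := mul_le_mul_of_nonneg_left htnz hε.le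
    have hΔsq : ‖Δ‖ ^ 2 ≤ δ ^ 2 := by nlinarith [norm_nonneg Δ]
    have h4 := mul_le_mul_of_nonneg_left hΔsq hLD
    rw [hB] at hBle
    ring_nf at htfz htnz' hBle h4 ⊢
    linarith
  intro y hy
  have hgy : f p + ε * ‖x - p‖ ≤ f y + ε * ‖x - y‖ := isMinOn_iff.1 hpmin y hy
  have hfx : f x < f z + ε * ‖x - z‖ := by
    have := hunreach z hzS
    linarith
  have hDy : D ≤ ‖x - y‖ := hdist y hy
  have heq : δ ^ 2 / (2 * D) * (L + 2 * ε / D) * D = (L / 2 + ε / D) * δ ^ 2 := by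
    field_simp
  have hcpos : 0 ≤ δ ^ 2 / (2 * D) * (L + 2 * ε / D) := by
    have h1 : 0 ≤ L + 2 * ε / D := by
      have := div_nonneg (by linarith : (0:ℝ) ≤ 2 * ε) hx.le
      linarith
    have h2 : 0 ≤ δ ^ 2 / (2 * D) := by positivity
    exact mul_nonneg h2 h1
  have hmono : δ ^ 2 / (2 * D) * (L + 2 * ε / D) * D
      ≤ δ ^ 2 / (2 * D) * (L + 2 * ε / D) * ‖x - y‖ :=
    mul_le_mul_of_nonneg_left hDy hcpos
  nlinarith [hgy, hgz, hfx, hmono, heq]
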